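/- (Lemma 1, monotonicity part.) If the step sizes satisfy 0 ≤ α_t ≤ 2/(L·σ²), then along the reweighted SGD iteration θ_{t+1} = U(θ_t, B_t, α_t) the validation loss monotonically decreases for any sequence of training batches B_0, B_1, …: namely G(θ_{t+1}) ≤ G(θ_t) for all t. -/

import Mathlib

open scoped RealInnerProductSpace BigOperators

/-- Descent lemma: if `G` has an `L`-Lipschitz gradient, then
`G (x - v) ≤ G x - ⟪∇G x, v⟫ + L/2 * ‖v‖²`. -/
lemma descent_lemma {d : ℕ} (G : EuclideanSpace ℝ (Fin d) → ℝ)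
    (hGd : Differentiable ℝ G) (L : ℝ)
    (hGL : ∀ x y, ‖gradient G x - gradient G y‖ ≤ L * ‖x - y‖)
    (x v : EuclideanSpace ℝ (Fin d)) :
    G (x - v) ≤ G x - ⟪gradient G x, v⟫ + L / 2 * ‖v‖ ^ 2 := by
  set φ : ℝ → ℝ := fun t =>
    G (x - t • v) + t * ⟪gradient G x, v⟫ - L / 2 * t ^ 2 * ‖v‖ ^ 2 with hφdef
  have hφ : ∀ t : ℝ, HasDerivAt φ
      (⟪gradient G (x - t • v), -v⟫ + ⟪gradient G x, v⟫ - L * t * ‖v‖ ^ 2) t := by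
    intro t
    have h1 : HasDerivAt (fun s : ℝ => x - s • v) (-v) t := by
      have := ((hasDerivAt_id t).smul_const v).const_sub x
      simpa using this
    have h2 : HasDerivAt (fun s : ℝ => G (x - s • v))
        (⟪gradient G (x - t • v), -v⟫) t := by
      have hg := (hGd (x - t • v)).hasGradientAt.hasFDerivAt
      have := hg.comp_hasDerivAt t h1
      simp [InnerProductSpace.toDual_apply_apply] at this ⊢
      exact this
    have h3 : HasDerivAt (fun s : ℝ => s * ⟪gradient G x, v⟫)
        (⟪gradient G x, v⟫) t := hasDerivAt_mul_const _
    have h4 : HasDerivAt (fun s : ℝ => L / 2 * s ^ 2 * ‖v‖ ^ 2)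
        (L * t * ‖v‖ ^ 2) t := by
      have := ((hasDerivAt_pow 2 t).const_mul (L / 2)).mul_const (‖v‖ ^ 2)
      refine this.congr_deriv ?_
      push_cast
      ring
    exact (h2.add h3).sub h4
  have hanti : AntitoneOn φ (Set.Icc (0 : ℝ) 1) := by
    apply antitoneOn_of_deriv_nonpos (convex_Icc 0 1)
    · exact fun t _ => (hφ t).continuousAt.continuousWithinAt
    · exact fun t _ => ((hφ t).differentiableAt).differentiableWithinAt
    · intro t ht
      rw [interior_Icc] at ht
      rw [(hφ t).deriv]
      have key : ⟪gradient G (x - t • v), -v⟫ + ⟪gradient G x, v⟫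
          ≤ L * t * ‖v‖ ^ 2 := by
        have h1 : ⟪gradient G (x - t • v), -v⟫ + ⟪gradient G x, v⟫
            = ⟪gradient G x - gradient G (x - t • v), v⟫ := by
          rw [inner_sub_left, inner_neg_right]; ring
        rw [h1]
        calc ⟪gradient G x - gradient G (x - t • v), v⟫
            ≤ ‖gradient G x - gradient G (x - t • v)‖ * ‖v‖ := real_inner_le_norm _ _
          _ ≤ (L * ‖x - (x - t • v)‖) * ‖v‖ := by
              apply mul_le_mul_of_nonneg_right (hGL _ _) (norm_nonneg _)
          _ = L * t * ‖v‖ ^ 2 := by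
              rw [sub_sub_cancel, norm_smul, Real.norm_of_nonneg ht.1.le]; ring
      linarith
  have h01 := hanti (Set.left_mem_Icc.2 zero_le_one) (Set.right_mem_Icc.2 zero_le_one)
      zero_le_one
  have hφ0 : φ 0 = G x := by simp [hφdef]
  have hφ1 : φ 1 = G (x - v) + ⟪gradient G x, v⟫ - L / 2 * ‖v‖ ^ 2 := by
    simp [hφdef]
  rw [hφ0, hφ1] at h01
  linarith

/-- Lemma 1, monotonicity part: if the step sizes satisfy
`0 ≤ α t ≤ 2/(L·σ²)`, then along the reweighted SGD iteration
`θ (t+1) = U (θ t) (B t) (α t)` the validation loss monotonically decreases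
for any sequence of training batches. -/
theorem reweighted_sgd_monotone_descent
    (d N M n : ℕ) (hd : 0 < d) (hN : 0 < N) (hM : 0 < M) (hn : 0 < n) (hMN : M ≤ N)
    (σ L : ℝ) (hσ : 0 < σ) (hL : 0 < L)
    (f : Fin N → EuclideanSpace ℝ (Fin d) → ℝ)
    (hf : ∀ i, ContDiff ℝ 1 (f i))
    (hfb : ∀ i x, ‖gradient (f i) x‖ ≤ σ)
    (G : EuclideanSpace ℝ (Fin d) → ℝ)
    (hG : ∀ θ, G θ = (1 / (M : ℝ)) * ∑ i : Fin M, f (Fin.castLE hMN i) θ)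
    (hGL : ∀ x y, ‖gradient G x - gradient G y‖ ≤ L * ‖x - y‖)
    (U : EuclideanSpace ℝ (Fin d) → (Fin n → Fin N) → ℝ → EuclideanSpace ℝ (Fin d))
    (hU : ∀ θ B α, U θ B α = θ - (α / (n : ℝ)) • ∑ k : Fin n,
        max ⟪gradient G θ, gradient (f (B k)) θ⟫ 0 • gradient (f (B k)) θ)
    (α : ℕ → ℝ) (hα : ∀ t, 0 ≤ α t) (hα' : ∀ t, α t ≤ 2 / (L * σ ^ 2))
    (B : ℕ → (Fin n → Fin N))
    (θ : ℕ → EuclideanSpace ℝ (Fin d))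
    (hθ : ∀ t, θ (t + 1) = U (θ t) (B t) (α t)) :
    ∀ t, G (θ (t + 1)) ≤ G (θ t) := by
  have hGd : Differentiable ℝ G := by
    have hGe : G = fun θ => (1 / (M : ℝ)) * ∑ i : Fin M, f (Fin.castLE hMN i) θ :=
      funext hG
    rw [hGe]
    exact Differentiable.const_mul
      (Differentiable.fun_sum fun i _ => (hf _).differentiable one_ne_zero) _
  intro t
  -- abbreviations
  set x := θ t with hx
  set g : Fin n → EuclideanSpace ℝ (Fin d) := fun k => gradient (f (B t k)) x with hg
  set w : Fin n → ℝ := fun k => max ⟪gradient G x, g k⟫ 0 with hw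
  have hwnn : ∀ k, 0 ≤ w k := fun k => le_max_right _ _
  set c : ℝ := α t / (n : ℝ) with hc
  have hcnn : 0 ≤ c := div_nonneg (hα t) (Nat.cast_nonneg n)
  set v : EuclideanSpace ℝ (Fin d) := c • ∑ k : Fin n, w k • g k with hv
  have hstep : θ (t + 1) = x - v := by
    rw [hθ t, hU]
  set S2 : ℝ := ∑ k : Fin n, (w k) ^ 2 with hS2
  have hS2nn : 0 ≤ S2 := Finset.sum_nonneg fun k _ => sq_nonneg _
  -- inner product identity
  have hinner : ⟪gradient G x, v⟫ = c * S2 := by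
    rw [hv, real_inner_smul_right, inner_sum]
    congr 1
    apply Finset.sum_congr rfl
    intro k _
    rw [real_inner_smul_right]
    show max ⟪gradient G x, g k⟫ 0 * ⟪gradient G x, g k⟫
        = (max ⟪gradient G x, g k⟫ 0) ^ 2
    rcases le_total (⟪gradient G x, g k⟫ : ℝ) 0 with h | h
    · rw [max_eq_right h]; ring
    · rw [max_eq_left h]; ring
  -- norm bound
  have hnormsum : ‖∑ k : Fin n, w k • g k‖ ≤ σ * ∑ k : Fin n, w k := by
    calc ‖∑ k : Fin n, w k • g k‖ ≤ ∑ k : Fin n, ‖w k • g k‖ := norm_sum_le _ _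
      _ ≤ ∑ k : Fin n, w k * σ := by
          apply Finset.sum_le_sum
          intro k _
          rw [norm_smul, Real.norm_of_nonneg (hwnn k)]
          exact mul_le_mul_of_nonneg_left (hfb _ _) (hwnn k)
      _ = σ * ∑ k : Fin n, w k := by rw [Finset.mul_sum]; simp [mul_comm]
  have hsumsq : (∑ k : Fin n, w k) ^ 2 ≤ (n : ℝ) * S2 := by
    have := sq_sum_le_card_mul_sum_sq (s := (Finset.univ : Finset (Fin n))) (f := w)
    simpa [hS2] using this
  have hnormv : ‖v‖ ^ 2 ≤ c ^ 2 * σ ^ 2 * ((n : ℝ) * S2) := by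
    have h1 : ‖v‖ ≤ c * (σ * ∑ k : Fin n, w k) := by
      rw [hv, norm_smul, Real.norm_of_nonneg hcnn]
      exact mul_le_mul_of_nonneg_left hnormsum hcnn
    have h2 : ‖v‖ ^ 2 ≤ (c * (σ * ∑ k : Fin n, w k)) ^ 2 :=
      pow_le_pow_left₀ (norm_nonneg _) h1 2
    calc ‖v‖ ^ 2 ≤ (c * (σ * ∑ k : Fin n, w k)) ^ 2 := h2
      _ = c ^ 2 * σ ^ 2 * (∑ k : Fin n, w k) ^ 2 := by ring
      _ ≤ c ^ 2 * σ ^ 2 * ((n : ℝ) * S2) := by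
          apply mul_le_mul_of_nonneg_left hsumsq (by positivity)
  -- descent lemma
  have hdesc := descent_lemma G hGd L hGL x v
  rw [hinner] at hdesc
  rw [hstep]
  have hL2 : 0 ≤ L / 2 := by positivity
  have hquad : L / 2 * ‖v‖ ^ 2 ≤ L / 2 * (c ^ 2 * σ ^ 2 * ((n : ℝ) * S2)) :=
    mul_le_mul_of_nonneg_left hnormv hL2
  -- arithmetic: L/2 * c² σ² n S2 ≤ c S2
  have hkey : L / 2 * (c ^ 2 * σ ^ 2 * ((n : ℝ) * S2)) ≤ c * S2 := by
    have hn' : (0 : ℝ) < (n : ℝ) := Nat.cast_pos.2 hn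
    have hcn : c * (n : ℝ) = α t := by
      rw [hc]; field_simp
    have hαL : L * σ ^ 2 * α t ≤ 2 := by
      have h2 := hα' t
      have hpos : (0 : ℝ) < L * σ ^ 2 := by positivity
      rw [le_div_iff₀ hpos] at h2
      linarith [h2]
    have expand : L / 2 * (c ^ 2 * σ ^ 2 * ((n : ℝ) * S2))
        = (L * σ ^ 2 * α t / 2) * (c * S2) := by
      rw [← hcn]; ring
    rw [expand]
    have : L * σ ^ 2 * α t / 2 ≤ 1 := by linarith
    nlinarith [mul_nonneg hcnn hS2nn]
  linarith
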